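/- arXiv:2603.05568 — 6 statements merged into one kernel-verified Lean document; each statement's English description precedes it below -/
import Mathlib

section
/- Let μ be a probability measure on a measurable space 𝒳. Fix an integer m ≥ 1 and let Δ = {ρ ∈ ℝ^m : ρ_s ≥ 0 for all s and Σ_{s=1}^m ρ_s = 1} be the probability simplex. Let C_1, …, C_m : 𝒳 → ℝ be bounded measurable, let ω_1, …, ω_m : 𝒳 → [0,1] be measurable with Σ_{s=1}^m ω_s(x) = 1 for every x, let δ ∈ [0,1], and for ρ ∈ Δ define f_ρ^δ(x) = Σ_{s=1}^m (δ ω_s(x) + (1−δ) ρ_s) C_s(x). Then the minimax equality holds: sup over measurable d : 𝒳 → [0,1] of inf_{ρ ∈ Δ} ∫ f_ρ^δ(x) d(x) dμ(x) = min_{ρ ∈ Δ} ∫ max(f_ρ^δ(x), 0) dμ(x). -/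
open MeasureTheory

open Finset

/-- Finite-dimensional separation: if `K ⊆ ℝ^m` is convex, nonempty, and every `y ∈ K`
has some coordinate `≤ V`, then there is `ρ` in the standard simplex with
`⟨ρ, y⟩ ≤ V` for all `y ∈ K`. -/
lemma pdro_separation {m : ℕ} (hm : 1 ≤ m) (V : ℝ) (K : Set (Fin m → ℝ))
    (hKconv : Convex ℝ K) (hKne : K.Nonempty) (hK : ∀ y ∈ K, ∃ s, y s ≤ V) :
    ∃ ρ ∈ stdSimplex ℝ (Fin m), ∀ y ∈ K, ∑ s, ρ s * y s ≤ V := by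
  haveI : Nonempty (Fin m) := Fin.pos_iff_nonempty.mp hm
  set O : Set (Fin m → ℝ) := ⋂ s, (fun y : Fin m → ℝ => y s) ⁻¹' Set.Ioi V with hO
  have hOmem : ∀ y : Fin m → ℝ, y ∈ O ↔ ∀ s, V < y s := by
    intro y; simp [hO]
  have hOconv : Convex ℝ O := by
    refine convex_iInter fun s => ?_
    exact (convex_Ioi V).linear_preimage (LinearMap.proj s : (Fin m → ℝ) →ₗ[ℝ] ℝ)
  have hOopen : IsOpen O := by
    refine isOpen_iInter_of_finite fun s => ?_
    exact (isOpen_Ioi).preimage (continuous_apply s)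
  have hdisj : Disjoint O K := by
    rw [Set.disjoint_left]
    intro y hyO hyK
    obtain ⟨s, hs⟩ := hK y hyK
    exact absurd ((hOmem y).mp hyO s) (not_lt.mpr hs)
  obtain ⟨f, u, hfO, hfK⟩ := geometric_hahn_banach_open hOconv hOopen hKconv hdisj
  set a : Fin m → ℝ := fun s => f (Pi.single s (1:ℝ)) with ha
  have hfeval : ∀ y : Fin m → ℝ, f y = ∑ s, y s * a s := by
    intro y
    have hy : y = ∑ s, y s • (Pi.single s (1:ℝ) : Fin m → ℝ) := by
      ext t; simp [Pi.single_apply]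
    conv_lhs => rw [hy]
    rw [map_sum]
    simp [ha, smul_eq_mul]
  -- each a s ≤ 0
  have hanonpos : ∀ s, a s ≤ 0 := by
    intro s
    by_contra hpos
    push_neg at hpos
    obtain ⟨n, hn⟩ := exists_nat_gt ((u - f (fun _ => V + 1)) / a s)
    have hn0 : (0:ℝ) ≤ (n:ℝ) := n.cast_nonneg
    have hmem : ((fun _ => V + 1) + (n:ℝ) • (Pi.single s (1:ℝ) : Fin m → ℝ)) ∈ O := by
      rw [hOmem]
      intro t
      simp only [Pi.add_apply, Pi.smul_apply, Pi.single_apply, smul_eq_mul]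
      rcases eq_or_ne t s with h | h
      · subst h; rw [if_pos rfl]; linarith
      · rw [if_neg h]; simp only [mul_zero, add_zero]; linarith
    have h3 := hfO _ hmem
    rw [map_add, _root_.map_smul, smul_eq_mul] at h3
    have hpos' : 0 < f (Pi.single s (1:ℝ)) := hpos
    have h2 : (u - f (fun _ => V + 1)) / a s * a s < (n:ℝ) * a s :=
      mul_lt_mul_of_pos_right hn hpos
    rw [div_mul_cancel₀ _ (ne_of_gt hpos)] at h2
    have has : a s = f (Pi.single s (1:ℝ)) := rfl
    rw [has] at h2
    linarith
  -- (V + ε) * ∑ a < u for all ε > 0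
  have hVe : ∀ ε : ℝ, 0 < ε → (V + ε) * ∑ s, a s < u := by
    intro ε hε
    have hmem : ((fun _ => V + ε) : Fin m → ℝ) ∈ O := by
      rw [hOmem]; intro t; simpa using hε
    have := hfO _ hmem
    rw [hfeval] at this
    simpa [← Finset.mul_sum] using this
  have hKne' := hKne
  obtain ⟨y₀, hy₀⟩ := hKne'
  -- ∑ a < 0
  have hsum_neg : ∑ s, a s < 0 := by
    rcases lt_or_eq_of_le (Finset.sum_nonpos (fun s _ => hanonpos s)) with h | h
    · exact h
    · exfalso
      have hall : ∀ s ∈ Finset.univ, a s = 0 :=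
        (Finset.sum_eq_zero_iff_of_nonpos (fun s _ => hanonpos s)).mp h
      have hf0 : ∀ y : Fin m → ℝ, f y = 0 := by
        intro y; rw [hfeval]
        exact Finset.sum_eq_zero fun s _ => by rw [hall s (Finset.mem_univ s), mul_zero]
      have h1 : (0:ℝ) < u := by
        have h3 := hVe 1 one_pos
        rw [h, mul_zero] at h3
        exact h3
      have h2 : u ≤ 0 := by
        have := hfK y₀ hy₀
        rwa [hf0] at this
      linarith
  -- V * ∑ a ≤ u
  have hVle : V * ∑ s, a s ≤ u := by
    by_contra hcon
    push_neg at hcon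
    set c : ℝ := -∑ s, a s with hc
    have hcpos : 0 < c := by simp [hc]; linarith
    set ε : ℝ := (V * ∑ s, a s - u) / (2 * c) with hε
    have hεpos : 0 < ε := by
      apply div_pos (by linarith) (by linarith)
    have := hVe ε hεpos
    have hcalc : (V + ε) * ∑ s, a s = V * ∑ s, a s - ε * c := by
      rw [hc]; ring
    rw [hcalc, hε] at this
    have : V * ∑ s, a s - (V * ∑ s, a s - u) / (2 * c) * c < u := this
    rw [div_mul_eq_mul_div, mul_comm (2:ℝ) c, ← div_div, mul_div_assoc,
      div_self (ne_of_gt hcpos), mul_one] at this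
    linarith
  -- define ρ
  refine ⟨fun s => a s / ∑ t, a t, ⟨fun s => ?_, ?_⟩, ?_⟩
  · exact div_nonneg_iff.mpr (Or.inr ⟨hanonpos s, hsum_neg.le⟩)
  · rw [← Finset.sum_div, div_self (ne_of_lt hsum_neg)]
  · intro y hy
    have h1 : u ≤ ∑ s, y s * a s := by rw [← hfeval]; exact hfK y hy
    have hne := ne_of_lt hsum_neg
    have key : ∑ s, a s / (∑ t, a t) * y s = (∑ s, y s * a s) / ∑ t, a t := by
      rw [Finset.sum_div]
      refine Finset.sum_congr rfl fun s _ => ?_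
      field_simp
    rw [key]
    calc (∑ s, y s * a s) / ∑ t, a t ≤ u / ∑ t, a t :=
          div_le_div_of_nonpos_of_le hsum_neg.le h1
        _ ≤ V := by
          have h2 : u / ∑ t, a t ≤ (V * ∑ t, a t) / ∑ t, a t :=
            div_le_div_of_nonpos_of_le hsum_neg.le hVle
          rwa [mul_div_assoc, div_self hne, mul_one] at h2

open MeasureTheory

/-- Decomposition of the weighted CATE combination over simplex vertices. -/
lemma pdro_vertex_sum {m : ℕ} (δ : ℝ) (ρ ωx Cx : Fin m → ℝ) (hρ : ∑ s, ρ s = 1) :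
    ∑ s, (δ * ωx s + (1 - δ) * ρ s) * Cx s
      = ∑ s, ρ s * (∑ t, (δ * ωx t + (1 - δ) * (Pi.single s (1:ℝ) : Fin m → ℝ) t) * Cx t) := by
  have key : ∀ t : Fin m,
      (∑ s, ρ s * ((δ * ωx t + (1 - δ) * (Pi.single s (1:ℝ) : Fin m → ℝ) t) * Cx t))
        = (δ * ωx t + (1 - δ) * ρ t) * Cx t := by
    intro t
    have expand : ∀ s : Fin m,
        ρ s * ((δ * ωx t + (1 - δ) * (Pi.single s (1:ℝ) : Fin m → ℝ) t) * Cx t)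
          = ρ s * (δ * ωx t * Cx t) + (if t = s then ρ s * ((1 - δ) * Cx t) else 0) := by
      intro s
      simp only [Pi.single_apply]
      rcases eq_or_ne t s with h | h
      · subst h; simp only [if_pos rfl, eq_self_iff_true, if_true]; ring
      · simp only [if_neg h]; ring
    rw [Finset.sum_congr rfl fun s _ => expand s, Finset.sum_add_distrib,
      Finset.sum_ite_eq, ← Finset.sum_mul, hρ]
    simp only [Finset.mem_univ, if_pos]
    ring
  rw [show (∑ s, ρ s * (∑ t, (δ * ωx t + (1 - δ) * (Pi.single s (1:ℝ) : Fin m → ℝ) t) * Cx t))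
      = ∑ s, ∑ t, ρ s * ((δ * ωx t + (1 - δ) * (Pi.single s (1:ℝ) : Fin m → ℝ) t) * Cx t) from
      Finset.sum_congr rfl fun s _ => Finset.mul_sum _ _ _,
    Finset.sum_comm, Finset.sum_congr rfl fun t _ => key t]

/-- Bounded measurable functions are integrable w.r.t. a finite measure. -/
lemma pdro_integrable {𝓧 : Type*} [MeasurableSpace 𝓧] (μ : Measure 𝓧) [IsFiniteMeasure μ]
    (f : 𝓧 → ℝ) (hf : Measurable f) (K : ℝ) (h : ∀ x, |f x| ≤ K) : Integrable f μ :=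
  Integrable.mono' (integrable_const K) hf.aestronglyMeasurable
    (Filter.Eventually.of_forall (by simpa [Real.norm_eq_abs] using h))

open MeasureTheory


/-- Minimax equality behind Theorems 1 and 2 of the paper: for bounded measurable source
CATEs, the supremum over (randomized) `[0,1]`-valued rules `d` of the worst-case policy value
`inf_{ρ ∈ Δ} ∫ f_ρ^δ d dμ` equals `min_{ρ ∈ Δ} ∫ max(f_ρ^δ, 0) dμ`, the minimum being
attained at some `ρ₀ ∈ Δ`. -/
theorem minimax_equality_pdro
    {𝓧 : Type*} [MeasurableSpace 𝓧] (μ : Measure 𝓧) [IsProbabilityMeasure μ]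
    (m : ℕ) (hm : 1 ≤ m)
    (C : Fin m → 𝓧 → ℝ) (hCmeas : ∀ s, Measurable (C s))
    (B : ℝ) (hCbd : ∀ s x, |C s x| ≤ B)
    (ω : Fin m → 𝓧 → ℝ) (hωmeas : ∀ s, Measurable (ω s))
    (hω01 : ∀ s x, ω s x ∈ Set.Icc (0:ℝ) 1) (hωsum : ∀ x, (∑ s, ω s x) = 1)
    (δ : ℝ) (hδ : δ ∈ Set.Icc (0:ℝ) 1) :
    ∃ ρ₀ ∈ stdSimplex ℝ (Fin m),
      IsLeast {w : ℝ | ∃ ρ ∈ stdSimplex ℝ (Fin m),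
          w = ∫ x, max (∑ s, (δ * ω s x + (1 - δ) * ρ s) * C s x) 0 ∂μ}
        (∫ x, max (∑ s, (δ * ω s x + (1 - δ) * ρ₀ s) * C s x) 0 ∂μ)
      ∧ sSup {v : ℝ | ∃ d : 𝓧 → ℝ, Measurable d ∧ (∀ x, d x ∈ Set.Icc (0:ℝ) 1) ∧
            v = sInf {w : ℝ | ∃ ρ ∈ stdSimplex ℝ (Fin m),
                w = ∫ x, (∑ s, (δ * ω s x + (1 - δ) * ρ s) * C s x) * d x ∂μ}}
          = ∫ x, max (∑ s, (δ * ω s x + (1 - δ) * ρ₀ s) * C s x) 0 ∂μ := by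
  classical
  obtain ⟨hδ0, hδ1⟩ := hδ
  haveI hFin : Nonempty (Fin m) := Fin.pos_iff_nonempty.mp hm
  have hXne : Nonempty 𝓧 := by
    by_contra h
    rw [not_nonempty_iff] at h
    have h1 : μ Set.univ = 1 := measure_univ
    rw [Set.univ_eq_empty_iff.mpr h] at h1
    simp at h1
  have hB : 0 ≤ B := (abs_nonneg _).trans (hCbd ⟨0, hm⟩ (Classical.arbitrary 𝓧))
  set Δ := stdSimplex ℝ (Fin m) with hΔ
  -- the weighted CATE combination
  let g : (Fin m → ℝ) → 𝓧 → ℝ := fun ρ x => ∑ s, (δ * ω s x + (1 - δ) * ρ s) * C s x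
  have hgmeas : ∀ ρ : Fin m → ℝ, Measurable (g ρ) := fun ρ =>
    Finset.measurable_sum _ fun s _ =>
      (((hωmeas s).const_mul δ).add_const ((1 - δ) * ρ s)).mul (hCmeas s)
  have hρ01 : ∀ ρ ∈ Δ, ∀ s, ρ s ∈ Set.Icc (0:ℝ) 1 := by
    intro ρ hρ s
    refine ⟨hρ.1 s, ?_⟩
    calc ρ s ≤ ∑ t, ρ t := Finset.single_le_sum (fun t _ => hρ.1 t) (Finset.mem_univ s)
      _ = 1 := hρ.2
  have hcoef : ∀ ρ ∈ Δ, ∀ (s : Fin m) (x : 𝓧),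
      0 ≤ δ * ω s x + (1 - δ) * ρ s ∧ δ * ω s x + (1 - δ) * ρ s ≤ 1 := by
    intro ρ hρ s x
    obtain ⟨hω0, hω1⟩ := hω01 s x
    obtain ⟨hρ0, hρ1⟩ := hρ01 ρ hρ s
    constructor
    · have := mul_nonneg hδ0 hω0
      have := mul_nonneg (by linarith : (0:ℝ) ≤ 1 - δ) hρ0
      linarith
    · have h1 : δ * ω s x ≤ δ * 1 := mul_le_mul_of_nonneg_left hω1 hδ0
      have h2 : (1 - δ) * ρ s ≤ (1 - δ) * 1 :=
        mul_le_mul_of_nonneg_left hρ1 (by linarith)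
      linarith
  have hgbd : ∀ ρ ∈ Δ, ∀ x, |g ρ x| ≤ (m : ℝ) * B := by
    intro ρ hρ x
    calc |g ρ x| ≤ ∑ s, |(δ * ω s x + (1 - δ) * ρ s) * C s x| :=
          Finset.abs_sum_le_sum_abs _ _
      _ ≤ ∑ _s : Fin m, B := by
          refine Finset.sum_le_sum fun s _ => ?_
          rw [abs_mul]
          obtain ⟨hc0, hc1⟩ := hcoef ρ hρ s x
          rw [abs_of_nonneg hc0]
          calc (δ * ω s x + (1 - δ) * ρ s) * |C s x| ≤ 1 * B :=
                mul_le_mul hc1 (hCbd s x) (abs_nonneg _) zero_le_one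
            _ = B := one_mul B
      _ = (m : ℝ) * B := by
          rw [Finset.sum_const, Finset.card_univ, Fintype.card_fin, nsmul_eq_mul]
  have hint : ∀ ρ ∈ Δ, ∀ d : 𝓧 → ℝ, Measurable d → (∀ x, d x ∈ Set.Icc (0:ℝ) 1) →
      Integrable (fun x => g ρ x * d x) μ := by
    intro ρ hρ d hdm hd01
    refine pdro_integrable μ _ ((hgmeas ρ).mul hdm) ((m : ℝ) * B) fun x => ?_
    rw [abs_mul]
    have hd : |d x| ≤ 1 := by
      obtain ⟨h0, h1⟩ := hd01 x
      rw [abs_of_nonneg h0]; exact h1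
    calc |g ρ x| * |d x| ≤ ((m : ℝ) * B) * 1 :=
          mul_le_mul (hgbd ρ hρ x) hd (abs_nonneg _) (by positivity)
      _ = (m : ℝ) * B := mul_one _
  have hvert : ∀ s : Fin m, (Pi.single s (1:ℝ) : Fin m → ℝ) ∈ Δ := by
    intro s
    constructor
    · intro t
      simp [Pi.single_apply]
      split <;> norm_num
    · simp [Pi.single_apply]
  -- the vector of vertex policy values
  let c : (𝓧 → ℝ) → Fin m → ℝ := fun d s => ∫ x, g (Pi.single s (1:ℝ)) x * d x ∂μ
  have hrep : ∀ ρ ∈ Δ, ∀ d : 𝓧 → ℝ, Measurable d → (∀ x, d x ∈ Set.Icc (0:ℝ) 1) →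
      (∫ x, g ρ x * d x ∂μ) = ∑ s, ρ s * c d s := by
    intro ρ hρ d hdm hd01
    have hpt : ∀ x, g ρ x * d x = ∑ s, ρ s * (g (Pi.single s (1:ℝ)) x * d x) := by
      intro x
      rw [show g ρ x = ∑ s, ρ s * g (Pi.single s (1:ℝ)) x from
        pdro_vertex_sum δ ρ (fun s => ω s x) (fun s => C s x) hρ.2, Finset.sum_mul]
      exact Finset.sum_congr rfl fun s _ => by ring
    calc (∫ x, g ρ x * d x ∂μ)
        = ∫ x, ∑ s, ρ s * (g (Pi.single s (1:ℝ)) x * d x) ∂μ := by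
          exact integral_congr_ae (Filter.Eventually.of_forall hpt)
      _ = ∑ s, ∫ x, ρ s * (g (Pi.single s (1:ℝ)) x * d x) ∂μ :=
          integral_finset_sum _ fun s _ =>
            ((hint _ (hvert s) d hdm hd01).const_mul (ρ s))
      _ = ∑ s, ρ s * c d s := Finset.sum_congr rfl fun s _ => integral_const_mul _ _
  -- indicator rule attaining the max
  have hind : ∀ ρ : Fin m → ℝ,
      Measurable (fun x => if 0 ≤ g ρ x then (1:ℝ) else 0) ∧
      (∀ x, (if 0 ≤ g ρ x then (1:ℝ) else 0) ∈ Set.Icc (0:ℝ) 1) ∧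
      (∀ x, g ρ x * (if 0 ≤ g ρ x then (1:ℝ) else 0) = max (g ρ x) 0) := by
    intro ρ
    refine ⟨Measurable.ite (measurableSet_le measurable_const (hgmeas ρ))
        measurable_const measurable_const, fun x => ?_, fun x => ?_⟩
    · split <;> norm_num
    · rcases le_or_gt 0 (g ρ x) with h | h
      · rw [if_pos h, mul_one, max_eq_left h]
      · rw [if_neg (not_le.mpr h), mul_zero, max_eq_right h.le]
  have hPhi_rep : ∀ ρ ∈ Δ, (∫ x, max (g ρ x) 0 ∂μ)
      = ∑ s, ρ s * c (fun x => if 0 ≤ g ρ x then (1:ℝ) else 0) s := by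
    intro ρ hρ
    obtain ⟨hm1, hm2, hm3⟩ := hind ρ
    rw [← hrep ρ hρ _ hm1 hm2]
    exact integral_congr_ae (Filter.Eventually.of_forall fun x => (hm3 x).symm)
  have hint_max : ∀ ρ ∈ Δ, Integrable (fun x => max (g ρ x) 0) μ := by
    intro ρ hρ
    obtain ⟨hm1, hm2, hm3⟩ := hind ρ
    exact (hint ρ hρ _ hm1 hm2).congr (Filter.Eventually.of_forall hm3)
  have hle_Phi : ∀ ρ ∈ Δ, ∀ d : 𝓧 → ℝ, Measurable d → (∀ x, d x ∈ Set.Icc (0:ℝ) 1) →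
      (∫ x, g ρ x * d x ∂μ) ≤ ∫ x, max (g ρ x) 0 ∂μ := by
    intro ρ hρ d hdm hd01
    refine integral_mono (hint ρ hρ d hdm hd01) (hint_max ρ hρ) fun x => ?_
    obtain ⟨hd0, hd1⟩ := hd01 x
    rcases le_or_gt 0 (g ρ x) with h | h
    · calc g ρ x * d x ≤ g ρ x * 1 := mul_le_mul_of_nonneg_left hd1 h
        _ = g ρ x := mul_one _
        _ ≤ max (g ρ x) 0 := le_max_left _ _
    · calc g ρ x * d x ≤ 0 := mul_nonpos_of_nonpos_of_nonneg h.le hd0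
        _ ≤ max (g ρ x) 0 := le_max_right _ _
  -- lower bound: min of the vertex values
  have hinf_le : ∀ ρ ∈ Δ, ∀ d : 𝓧 → ℝ,
      Finset.univ.inf' Finset.univ_nonempty (c d) ≤ ∑ s, ρ s * c d s := by
    intro ρ hρ d
    calc Finset.univ.inf' Finset.univ_nonempty (c d)
        = (∑ s, ρ s) * Finset.univ.inf' Finset.univ_nonempty (c d) := by
          rw [hρ.2, one_mul]
      _ = ∑ s, ρ s * Finset.univ.inf' Finset.univ_nonempty (c d) := Finset.sum_mul _ _ _
      _ ≤ ∑ s, ρ s * c d s := Finset.sum_le_sum fun s _ =>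
          mul_le_mul_of_nonneg_left (Finset.inf'_le _ (Finset.mem_univ s)) (hρ.1 s)
  have hinner : ∀ d : 𝓧 → ℝ, Measurable d → (∀ x, d x ∈ Set.Icc (0:ℝ) 1) →
      sInf {w : ℝ | ∃ ρ ∈ Δ, w = ∫ x, g ρ x * d x ∂μ}
        = Finset.univ.inf' Finset.univ_nonempty (c d) := by
    intro d hdm hd01
    refine IsLeast.csInf_eq ⟨?_, ?_⟩
    · obtain ⟨s₀, _, hs₀⟩ := Finset.exists_mem_eq_inf' (Finset.univ_nonempty) (c d)
      refine ⟨Pi.single s₀ (1:ℝ), hvert s₀, ?_⟩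
      rw [hs₀, hrep _ (hvert s₀) d hdm hd01]
      simp [Pi.single_apply, Finset.sum_ite_eq]
    · rintro w ⟨ρ, hρ, rfl⟩
      rw [hrep ρ hρ d hdm hd01]
      exact hinf_le ρ hρ d
  -- the outer set and its supremum
  set Souter : Set ℝ := {v : ℝ | ∃ d : 𝓧 → ℝ, Measurable d ∧ (∀ x, d x ∈ Set.Icc (0:ℝ) 1) ∧
      v = sInf {w : ℝ | ∃ ρ ∈ Δ, w = ∫ x, g ρ x * d x ∂μ}} with hSouter
  set V : ℝ := sSup Souter with hV
  have hd0mem : (fun _ : 𝓧 => (0:ℝ)) = (fun _ : 𝓧 => (0:ℝ)) := rfl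
  have hSne : Souter.Nonempty := by
    refine ⟨_, (fun _ : 𝓧 => (0:ℝ)), measurable_const, fun x => ⟨le_refl _, zero_le_one⟩, rfl⟩
  have hcbd : ∀ d : 𝓧 → ℝ, Measurable d → (∀ x, d x ∈ Set.Icc (0:ℝ) 1) →
      ∀ s, c d s ≤ (m : ℝ) * B := by
    intro d hdm hd01 s
    calc c d s ≤ ∫ _x, (m : ℝ) * B ∂μ := by
          refine integral_mono (hint _ (hvert s) d hdm hd01) (integrable_const _) fun x => ?_
          calc g (Pi.single s (1:ℝ)) x * d x ≤ |g (Pi.single s (1:ℝ)) x * d x| := le_abs_self _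
            _ ≤ (m : ℝ) * B := by
              rw [abs_mul]
              have hd : |d x| ≤ 1 := by
                obtain ⟨h0, h1⟩ := hd01 x
                rw [abs_of_nonneg h0]; exact h1
              calc |g (Pi.single s (1:ℝ)) x| * |d x| ≤ ((m : ℝ) * B) * 1 :=
                    mul_le_mul (hgbd _ (hvert s) x) hd (abs_nonneg _) (by positivity)
                _ = (m : ℝ) * B := mul_one _
      _ = (m : ℝ) * B := by simp
  have hSbdd : BddAbove Souter := by
    refine ⟨(m : ℝ) * B, ?_⟩
    rintro v ⟨d, hdm, hd01, rfl⟩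
    rw [hinner d hdm hd01]
    exact (Finset.inf'_le _ (Finset.mem_univ (Classical.arbitrary (Fin m)))).trans
      (hcbd d hdm hd01 _)
  -- the convex set of vertex-value vectors
  set K : Set (Fin m → ℝ) := {y | ∃ d : 𝓧 → ℝ, Measurable d ∧
      (∀ x, d x ∈ Set.Icc (0:ℝ) 1) ∧ y = c d} with hK
  have hKconv : Convex ℝ K := by
    rintro y₁ ⟨d₁, hd₁m, hd₁01, rfl⟩ y₂ ⟨d₂, hd₂m, hd₂01, rfl⟩ a b ha hb hab
    refine ⟨fun x => a * d₁ x + b * d₂ x,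
      ((hd₁m.const_mul a).add (hd₂m.const_mul b)), fun x => ?_, ?_⟩
    · obtain ⟨h10, h11⟩ := hd₁01 x
      obtain ⟨h20, h21⟩ := hd₂01 x
      refine ⟨?_, ?_⟩
      · show (0:ℝ) ≤ a * d₁ x + b * d₂ x
        have := mul_nonneg ha h10
        have := mul_nonneg hb h20
        linarith
      · show a * d₁ x + b * d₂ x ≤ 1
        have h1 : a * d₁ x ≤ a * 1 := mul_le_mul_of_nonneg_left h11 ha
        have h2 : b * d₂ x ≤ b * 1 := mul_le_mul_of_nonneg_left h21 hb
        linarith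
    · funext s
      show a * c d₁ s + b * c d₂ s = _
      have heq : ∀ x, g (Pi.single s (1:ℝ)) x * (a * d₁ x + b * d₂ x)
          = a * (g (Pi.single s (1:ℝ)) x * d₁ x) + b * (g (Pi.single s (1:ℝ)) x * d₂ x) := by
        intro x; ring
      show a * c d₁ s + b * c d₂ s
          = ∫ x, g (Pi.single s (1:ℝ)) x * (a * d₁ x + b * d₂ x) ∂μ
      rw [integral_congr_ae (Filter.Eventually.of_forall heq), integral_add
        ((hint _ (hvert s) d₁ hd₁m hd₁01).const_mul a)
        ((hint _ (hvert s) d₂ hd₂m hd₂01).const_mul b),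
        integral_const_mul, integral_const_mul]
  have hKne : K.Nonempty :=
    ⟨_, (fun _ : 𝓧 => (0:ℝ)), measurable_const, fun x => ⟨le_refl _, zero_le_one⟩, rfl⟩
  have hKle : ∀ y ∈ K, ∃ s, y s ≤ V := by
    rintro y ⟨d, hdm, hd01, rfl⟩
    obtain ⟨s₀, _, hs₀⟩ := Finset.exists_mem_eq_inf' (Finset.univ_nonempty) (c d)
    refine ⟨s₀, ?_⟩
    rw [← hs₀]
    have hmem : Finset.univ.inf' Finset.univ_nonempty (c d) ∈ Souter := by
      refine ⟨d, hdm, hd01, (hinner d hdm hd01).symm⟩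
    exact le_csSup hSbdd hmem
  obtain ⟨ρ₀, hρ₀, hsep⟩ := pdro_separation hm V K hKconv hKne hKle
  -- V ≤ Φ(ρ) for all ρ in the simplex
  have hVlePhi : ∀ ρ ∈ Δ, V ≤ ∫ x, max (g ρ x) 0 ∂μ := by
    intro ρ hρ
    refine csSup_le hSne ?_
    rintro v ⟨d, hdm, hd01, rfl⟩
    rw [hinner d hdm hd01]
    calc Finset.univ.inf' Finset.univ_nonempty (c d) ≤ ∑ s, ρ s * c d s := hinf_le ρ hρ d
      _ = ∫ x, g ρ x * d x ∂μ := (hrep ρ hρ d hdm hd01).symm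
      _ ≤ ∫ x, max (g ρ x) 0 ∂μ := hle_Phi ρ hρ d hdm hd01
  -- Φ(ρ₀) ≤ V via the separating ρ₀
  have hPhile : (∫ x, max (g ρ₀ x) 0 ∂μ) ≤ V := by
    obtain ⟨hm1, hm2, _⟩ := hind ρ₀
    rw [hPhi_rep ρ₀ hρ₀]
    exact hsep _ ⟨_, hm1, hm2, rfl⟩
  have hVeq : (∫ x, max (g ρ₀ x) 0 ∂μ) = V := le_antisymm hPhile (hVlePhi ρ₀ hρ₀)
  refine ⟨ρ₀, hρ₀, ⟨⟨ρ₀, hρ₀, rfl⟩, ?_⟩, ?_⟩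
  · rintro w ⟨ρ, hρ, rfl⟩
    calc (∫ x, max (g ρ₀ x) 0 ∂μ) = V := hVeq
      _ ≤ ∫ x, max (g ρ x) 0 ∂μ := hVlePhi ρ hρ
  · exact hVeq.symm
end

section
/- Let μ be a probability measure on a measurable space 𝒳, let f, g : 𝒳 → ℝ be measurable with f μ-integrable, and suppose there exist c₂ > 0 and α > 0 such that μ({x : |f(x)| < γ}) ≤ c₂ γ^α for every γ > 0 (margin condition). Then for every γ > 0, ∫ |f(x)| · 1{1{f(x) > 0} ≠ 1{g(x) > 0}} dμ(x) ≤ c₂ γ^{1+α} + γ^{−1} ∫ (f(x) − g(x))² dμ(x). -/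
open MeasureTheory

/-- Split inequality in the proof of Lemma 1: under the margin condition
`μ(|f| < γ) ≤ c₂ γ^α`, the `|f|`-weighted measure of the region where the rules
`1{f > 0}` and `1{g > 0}` disagree is at most `c₂ γ^{1+α} + γ⁻¹ ∫ (f-g)² dμ`. -/
theorem margin_split_inequality
    {𝓧 : Type*} [MeasurableSpace 𝓧] (μ : Measure 𝓧) [IsProbabilityMeasure μ]
    (f g : 𝓧 → ℝ) (hf : Measurable f) (hg : Measurable g)
    (hfint : Integrable f μ)
    (hfgint : Integrable (fun x => (f x - g x) ^ 2) μ)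
    (c₂ α : ℝ) (hc₂ : 0 < c₂) (hα : 0 < α)
    (hmargin : ∀ γ > (0:ℝ), μ {x | |f x| < γ} ≤ ENNReal.ofReal (c₂ * γ ^ α)) :
    ∀ γ > (0:ℝ),
      (∫ x in {x | (0 < f x) ≠ (0 < g x)}, |f x| ∂μ)
        ≤ c₂ * γ ^ (1 + α) + γ⁻¹ * ∫ x, (f x - g x) ^ 2 ∂μ := by
  intro γ hγ
  set S : Set 𝓧 := {x | (0 < f x) ≠ (0 < g x)} with hS
  have hSm : MeasurableSet S := by
    have : S = ({x | 0 < f x} ∩ {x | 0 < g x}ᶜ) ∪ ({x | 0 < f x}ᶜ ∩ {x | 0 < g x}) := by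
      ext x
      simp only [hS, Set.mem_setOf_eq, Set.mem_union, Set.mem_inter_iff, Set.mem_compl_iff,
        Set.mem_setOf_eq, ne_eq, eq_iff_iff]
      tauto
    rw [this]
    exact ((measurableSet_lt measurable_const hf).inter
        (measurableSet_lt measurable_const hg).compl).union
      ((measurableSet_lt measurable_const hf).compl.inter
        (measurableSet_lt measurable_const hg))
  set A : Set 𝓧 := S ∩ {x | |f x| < γ} with hA
  set B : Set 𝓧 := S ∩ {x | γ ≤ |f x|} with hB
  have hAm : MeasurableSet A := hSm.inter (measurableSet_lt hf.abs measurable_const)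
  have hBm : MeasurableSet B := hSm.inter (measurableSet_le measurable_const hf.abs)
  have habs : Integrable (fun x => |f x|) μ := hfint.abs
  have hSeq : S = A ∪ B := by
    ext x
    simp only [hA, hB, Set.mem_inter_iff, Set.mem_union, Set.mem_setOf_eq]
    constructor
    · intro h
      rcases lt_or_ge (|f x|) γ with h' | h'
      · exact Or.inl ⟨h, h'⟩
      · exact Or.inr ⟨h, h'⟩
    · rintro (⟨h, _⟩ | ⟨h, _⟩) <;> exact h
  have hdisj : Disjoint A B := by
    rw [Set.disjoint_left]
    rintro x ⟨_, hx1⟩ ⟨_, hx2⟩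
    simp only [Set.mem_setOf_eq] at hx1 hx2
    exact absurd hx2 (not_le.mpr hx1)
  have hsplit : (∫ x in S, |f x| ∂μ) = (∫ x in A, |f x| ∂μ) + (∫ x in B, |f x| ∂μ) := by
    rw [hSeq]
    exact setIntegral_union hdisj hBm habs.integrableOn habs.integrableOn
  -- bound on A
  have hμA : (μ A).toReal ≤ c₂ * γ ^ α := by
    have h1 : μ A ≤ μ {x | |f x| < γ} := measure_mono (Set.inter_subset_right)
    have h2 := (h1.trans (hmargin γ hγ))
    have hfin : μ A ≠ ⊤ := measure_ne_top μ A
    calc (μ A).toReal ≤ (ENNReal.ofReal (c₂ * γ ^ α)).toReal := ENNReal.toReal_mono ENNReal.ofReal_ne_top h2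
      _ = c₂ * γ ^ α := ENNReal.toReal_ofReal (by positivity)
  have hAbound : (∫ x in A, |f x| ∂μ) ≤ c₂ * γ ^ (1 + α) := by
    have h1 : (∫ x in A, |f x| ∂μ) ≤ ∫ x in A, γ ∂μ := by
      apply setIntegral_mono_on habs.integrableOn ((integrableOn_const_iff).mpr (Or.inr (measure_lt_top μ A))) hAm
      intro x hx
      exact le_of_lt hx.2
    have h2 : (∫ x in A, γ ∂μ) = (μ A).toReal * γ := by
      simp [setIntegral_const]
      exact Or.inl rfl
    calc (∫ x in A, |f x| ∂μ) ≤ (μ A).toReal * γ := h1.trans_eq h2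
      _ ≤ (c₂ * γ ^ α) * γ := by
          exact mul_le_mul_of_nonneg_right hμA hγ.le
      _ = c₂ * γ ^ (1 + α) := by
          rw [Real.rpow_add hγ, Real.rpow_one]; ring
  -- bound on B
  have hBbound : (∫ x in B, |f x| ∂μ) ≤ γ⁻¹ * ∫ x, (f x - g x) ^ 2 ∂μ := by
    have hpt : ∀ x ∈ B, |f x| ≤ γ⁻¹ * (f x - g x) ^ 2 := by
      rintro x ⟨hxS, hxγ⟩
      have hne : (0 < f x) ≠ (0 < g x) := hxS
      have hdiff : |f x| ≤ |f x - g x| := by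
        rcases lt_or_ge 0 (f x) with hfx | hfx
        · have hgx : ¬ 0 < g x := fun h => hne (propext (iff_of_true hfx h))
          push_neg at hgx
          rw [abs_of_pos hfx, abs_of_nonneg (by linarith)]
          linarith
        · have hgx : 0 < g x := by
            by_contra h
            exact hne (propext (iff_of_false (not_lt.mpr hfx) h))
          rw [abs_of_nonpos hfx, abs_of_nonpos (by linarith)]
          linarith
      have h1 : |f x| * γ ≤ (f x - g x) ^ 2 := by
        calc |f x| * γ ≤ |f x - g x| * |f x - g x| :=
              mul_le_mul hdiff (hxγ.trans hdiff) hγ.le (abs_nonneg _)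
          _ = (f x - g x) ^ 2 := by rw [← abs_mul, ← sq, abs_sq]
      rw [inv_mul_eq_div, le_div_iff₀ hγ]
      exact h1
    have h1 : (∫ x in B, |f x| ∂μ) ≤ ∫ x in B, γ⁻¹ * (f x - g x) ^ 2 ∂μ := by
      apply setIntegral_mono_on habs.integrableOn ((hfgint.const_mul γ⁻¹).integrableOn) hBm hpt
    have h2 : (∫ x in B, γ⁻¹ * (f x - g x) ^ 2 ∂μ) ≤ ∫ x, γ⁻¹ * (f x - g x) ^ 2 ∂μ := by
      apply setIntegral_le_integral (hfgint.const_mul γ⁻¹)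
      filter_upwards with x
      positivity
    calc (∫ x in B, |f x| ∂μ) ≤ ∫ x, γ⁻¹ * (f x - g x) ^ 2 ∂μ := h1.trans h2
      _ = γ⁻¹ * ∫ x, (f x - g x) ^ 2 ∂μ := integral_const_mul _ _
  rw [hsplit]
  exact add_le_add hAbound hBbound
end

section
/- Let μ be a probability measure on a measurable space 𝒳, let f, g : 𝒳 → ℝ be measurable with f μ-integrable, and suppose there exist c₂ > 0 and α > 0 such that μ({x : |f(x)| < γ}) ≤ c₂ γ^α for every γ > 0 (margin condition). If ε > 0 and ∫ (f(x) − g(x))² dμ(x) ≤ ε, then ∫ max(f(x), 0) dμ(x) − ∫ f(x) · 1{g(x) > 0} dμ(x) ≤ (c₂ + 1) · ε^{(1+α)/(2+α)}. -/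
open MeasureTheory

/-- Optimized margin-based regret bound at the core of Lemma 1: under the margin condition
`μ(|f| < γ) ≤ c₂ γ^α` and the L² estimation error bound `∫ (f-g)² dμ ≤ ε`, the regret of
the estimated rule `1{g > 0}` satisfies
`∫ max(f,0) dμ - ∫ f 1{g>0} dμ ≤ (c₂ + 1) ε^{(1+α)/(2+α)}`. -/
theorem margin_regret_bound
    {𝓧 : Type*} [MeasurableSpace 𝓧] (μ : Measure 𝓧) [IsProbabilityMeasure μ]
    (f g : 𝓧 → ℝ) (hf : Measurable f) (hg : Measurable g)
    (hfint : Integrable f μ)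
    (hfgint : Integrable (fun x => (f x - g x) ^ 2) μ)
    (c₂ α : ℝ) (hc₂ : 0 < c₂) (hα : 0 < α)
    (hmargin : ∀ γ > (0:ℝ), μ {x | |f x| < γ} ≤ ENNReal.ofReal (c₂ * γ ^ α))
    (ε : ℝ) (hε : 0 < ε) (hL2 : (∫ x, (f x - g x) ^ 2 ∂μ) ≤ ε) :
    (∫ x, max (f x) 0 ∂μ) - (∫ x, f x * (if 0 < g x then (1:ℝ) else 0) ∂μ)
      ≤ (c₂ + 1) * ε ^ ((1 + α) / (2 + α)) := by
  have h2α : (0:ℝ) < 2 + α := by linarith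
  set γ : ℝ := ε ^ ((2 + α)⁻¹) with hγdef
  have hγ : 0 < γ := Real.rpow_pos_of_pos hε _
  set s : Set 𝓧 := {x | |f x| < γ} with hs
  have hsm : MeasurableSet s := measurableSet_lt hf.abs measurable_const
  -- integrabilities
  have hInd : Integrable (s.indicator fun _ => (1:ℝ)) μ :=
    (integrable_const (1:ℝ)).indicator hsm
  have hψ : Integrable (fun x => γ * s.indicator (fun _ => (1:ℝ)) x + (f x - g x) ^ 2 / γ) μ :=
    (hInd.const_mul γ).add (hfgint.div_const γ)
  have hmax : Integrable (fun x => max (f x) 0) μ := hfint.pos_part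
  have hindg : Measurable (fun x => (if 0 < g x then (1:ℝ) else 0)) :=
    Measurable.ite (measurableSet_lt measurable_const hg) measurable_const measurable_const
  have hfind : Integrable (fun x => f x * (if 0 < g x then (1:ℝ) else 0)) μ := by
    refine hfint.abs.mono' ((hf.mul hindg).aestronglyMeasurable) ?_
    filter_upwards with x
    by_cases h : 0 < g x <;> simp [h, abs_nonneg]
  -- pointwise bound
  have hpt : ∀ x, max (f x) 0 - f x * (if 0 < g x then (1:ℝ) else 0)
      ≤ γ * s.indicator (fun _ => (1:ℝ)) x + (f x - g x) ^ 2 / γ := by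
    intro x
    have hsq : 0 ≤ (f x - g x) ^ 2 / γ := div_nonneg (sq_nonneg _) hγ.le
    have hindnn : 0 ≤ γ * s.indicator (fun _ => (1:ℝ)) x := by
      by_cases h : x ∈ s <;> simp [h, hγ.le]
    by_cases hgx : 0 < g x
    · by_cases hfx : 0 < f x
      · simp only [if_pos hgx, mul_one, max_eq_left hfx.le, sub_self]
        positivity
      · -- f x ≤ 0 < g x : mismatch, value = -f x = |f x|
        push_neg at hfx
        have hval : max (f x) 0 - f x * (if 0 < g x then (1:ℝ) else 0) = |f x| := by
          rw [if_pos hgx, mul_one, max_eq_right hfx, abs_of_nonpos hfx]; ring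
        rw [hval]
        by_cases hm : x ∈ s
        · have : |f x| < γ := hm
          calc |f x| ≤ γ * s.indicator (fun _ => (1:ℝ)) x := by simp [hm, this.le]
            _ ≤ _ := le_add_of_nonneg_right hsq
        · have h1 : γ ≤ |f x| := le_of_not_gt hm
          have h2 : |f x| ≤ |f x - g x| := by
            rw [abs_of_nonpos hfx, abs_of_nonpos (by linarith)]; linarith
          have h3 : γ * |f x| ≤ (f x - g x) ^ 2 := by
            nlinarith [sq_abs (f x - g x), abs_nonneg (f x), abs_nonneg (f x - g x)]
          have : |f x| ≤ (f x - g x) ^ 2 / γ := (le_div_iff₀ hγ).2 (by linarith [h3])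
          calc |f x| ≤ (f x - g x) ^ 2 / γ := this
            _ ≤ _ := le_add_of_nonneg_left hindnn
    · by_cases hfx : 0 < f x
      · -- f x > 0 ≥ g x : mismatch, value = f x = |f x|
        push_neg at hgx
        have hval : max (f x) 0 - f x * (if 0 < g x then (1:ℝ) else 0) = |f x| := by
          rw [if_neg (not_lt.2 hgx), mul_zero, max_eq_left hfx.le, abs_of_pos hfx]; ring
        rw [hval]
        by_cases hm : x ∈ s
        · have : |f x| < γ := hm
          calc |f x| ≤ γ * s.indicator (fun _ => (1:ℝ)) x := by simp [hm, this.le]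
            _ ≤ _ := le_add_of_nonneg_right hsq
        · have h1 : γ ≤ |f x| := le_of_not_gt hm
          have h2 : |f x| ≤ |f x - g x| := by
            rw [abs_of_pos hfx, abs_of_pos (by linarith)]; linarith
          have h3 : γ * |f x| ≤ (f x - g x) ^ 2 := by
            nlinarith [sq_abs (f x - g x), abs_nonneg (f x), abs_nonneg (f x - g x)]
          have : |f x| ≤ (f x - g x) ^ 2 / γ := (le_div_iff₀ hγ).2 (by linarith [h3])
          calc |f x| ≤ (f x - g x) ^ 2 / γ := this
            _ ≤ _ := le_add_of_nonneg_left hindnn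
      · push_neg at hfx hgx
        simp only [if_neg (not_lt.2 hgx), mul_zero, max_eq_right hfx, sub_zero]
        positivity
  have hstep : (∫ x, max (f x) 0 ∂μ) - (∫ x, f x * (if 0 < g x then (1:ℝ) else 0) ∂μ)
      ≤ ∫ x, (γ * s.indicator (fun _ => (1:ℝ)) x + (f x - g x) ^ 2 / γ) ∂μ := by
    rw [← integral_sub hmax hfind]
    exact integral_mono (hmax.sub hfind) hψ hpt
  have hμs : (μ s).toReal ≤ c₂ * γ ^ α := by
    have h0 : 0 ≤ c₂ * γ ^ α := by positivity
    exact ENNReal.toReal_le_of_le_ofReal h0 (hmargin γ hγ)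
  have hsplit : (∫ x, (γ * s.indicator (fun _ => (1:ℝ)) x + (f x - g x) ^ 2 / γ) ∂μ)
      = γ * (μ s).toReal + (∫ x, (f x - g x) ^ 2 ∂μ) / γ := by
    rw [integral_add (hInd.const_mul γ) (hfgint.div_const γ), integral_const_mul,
      integral_div, integral_indicator_const (1:ℝ) hsm]
    simp [Measure.real]
  -- arithmetic
  have hE1 : γ * γ ^ α = ε ^ ((1 + α) / (2 + α)) := by
    have h := Real.rpow_add hγ 1 α
    rw [Real.rpow_one] at h
    rw [← h, hγdef, ← Real.rpow_mul hε.le]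
    congr 1
    field_simp
  have hE2 : ε / γ = ε ^ ((1 + α) / (2 + α)) := by
    have h := Real.rpow_sub hε 1 ((2 + α)⁻¹)
    rw [Real.rpow_one] at h
    rw [hγdef, ← h]
    congr 1
    field_simp
    ring
  calc (∫ x, max (f x) 0 ∂μ) - (∫ x, f x * (if 0 < g x then (1:ℝ) else 0) ∂μ)
      ≤ γ * (μ s).toReal + (∫ x, (f x - g x) ^ 2 ∂μ) / γ := by rw [← hsplit]; exact hstep
    _ ≤ γ * (c₂ * γ ^ α) + ε / γ := by
        gcongr
    _ = c₂ * (γ * γ ^ α) + ε / γ := by ring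
    _ = (c₂ + 1) * ε ^ ((1 + α) / (2 + α)) := by rw [hE1, hE2]; ring
end

section
/- Let μ be a probability measure on a measurable space 𝒳. Fix an integer m ≥ 1 and let Δ = {ρ ∈ ℝ^m : ρ_s ≥ 0 for all s and Σ_{s=1}^m ρ_s = 1} be the probability simplex. Let C_1, …, C_m, Ĉ_1, …, Ĉ_m : 𝒳 → ℝ be measurable with |C_s(x)| ≤ c₁ for all x and s, let ω_1, …, ω_m and ω̂_1, …, ω̂_m : 𝒳 → [0,1] be measurable with Σ_s ω_s(x) = 1 and Σ_s ω̂_s(x) = 1 for every x, let ρ₀, ρ̂ ∈ Δ and δ ∈ [0,1], and set f(x) = Σ_s (δ ω_s(x) + (1−δ) ρ₀_s) C_s(x) and f̂(x) = Σ_s (δ ω̂_s(x) + (1−δ) ρ̂_s) Ĉ_s(x). Suppose there exist c₂ > 0 and α > 0 such that μ({x : |f(x)| < γ}) ≤ c₂ γ^α for every γ > 0, and suppose Δ_ω > 0 and Δ_C > 0 satisfy ∫ (ω̂_s − ω_s)² dμ ≤ Δ_ω and ∫ (Ĉ_s − C_s)² dμ ≤ Δ_C for every s. Then there exists a constant c >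 0 depending only on m, c₁, c₂ and α such that ∫ f(x) 1{f(x) > 0} dμ(x) − ∫ f(x) 1{f̂(x) > 0} dμ(x) ≤ c · [ δ² Δ_ω + (1−δ)² Σ_{s=1}^m (ρ₀_s − ρ̂_s)² + Δ_C ]^{(1+α)/(2+α)}. -/
open MeasureTheory

lemma key_pointwise (u v γ : ℝ) (hγ : 0 < γ) :
    u * ((if 0 < u then (1:ℝ) else 0) - (if 0 < v then (1:ℝ) else 0))
      ≤ γ * (if |u| < γ then (1:ℝ) else 0) + (u - v)^2 / γ := by
  have hsq : 0 ≤ (u - v)^2 / γ := div_nonneg (sq_nonneg _) hγ.le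
  by_cases hu : 0 < u <;> by_cases hv : 0 < v <;> simp [hu, hv]
  · positivity
  · by_cases habs : |u| < γ
    · simp [habs]; rw [abs_of_pos hu] at habs; linarith
    · simp [habs]
      rw [le_div_iff₀ hγ]
      rw [abs_of_pos hu, not_lt] at habs
      push_neg at hv
      nlinarith
  · by_cases habs : |u| < γ
    · simp [habs]; push_neg at hu; rw [abs_of_nonpos hu] at habs; linarith
    · simp [habs]
      rw [le_div_iff₀ hγ]
      push_neg at hu
      rw [abs_of_nonpos hu, not_lt] at habs
      nlinarith
  · positivity

lemma term_sq (a b q CC D c₁ : ℝ) (hC : |CC| ≤ c₁) (hq0 : 0 ≤ q) (hq1 : q ≤ 1) :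
    ((a + b) * CC + q * D)^2 ≤ 3 * (a^2 * c₁^2 + b^2 * c₁^2 + D^2) := by
  have hC2 : CC^2 ≤ c₁^2 := by
    have := abs_le.mp hC
    nlinarith
  have h1 : a^2 * CC^2 ≤ a^2 * c₁^2 := mul_le_mul_of_nonneg_left hC2 (sq_nonneg a)
  have h2 : b^2 * CC^2 ≤ b^2 * c₁^2 := mul_le_mul_of_nonneg_left hC2 (sq_nonneg b)
  have hq2 : q^2 ≤ 1 := by nlinarith
  have h3 : q^2 * D^2 ≤ D^2 := by
    calc q^2 * D^2 ≤ 1 * D^2 := mul_le_mul_of_nonneg_right hq2 (sq_nonneg D)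
    _ = D^2 := one_mul _
  nlinarith [sq_nonneg (a*CC - b*CC), sq_nonneg (a*CC - q*D), sq_nonneg (b*CC - q*D)]

/-- Deterministic core of Lemma 1 of the paper: there is a constant `c > 0` depending only on
`m, c₁, c₂, α` such that, whenever the true source CATEs are bounded by `c₁` (C1), the
worst-case decision function `f` satisfies the margin condition with `c₂, α` (C2(i)), and the
nuisance estimates have L² errors at most `Δ_ω` and `Δ_C` (C3), the regret of the estimated
PDRO rule `1{f̂ > 0}` is at most
`c (δ² Δ_ω + (1-δ)² Σ_s (ρ₀_s - ρ̂_s)² + Δ_C)^{(1+α)/(2+α)}`. -/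
theorem lemma1_regret_bound
    (m : ℕ) (hm : 1 ≤ m) (c₁ c₂ α : ℝ) (hc₁ : 0 < c₁) (hc₂ : 0 < c₂) (hα : 0 < α) :
    ∃ c : ℝ, 0 < c ∧
      ∀ (𝓧 : Type) [MeasurableSpace 𝓧] (μ : Measure 𝓧) [IsProbabilityMeasure μ]
        (C Chat : Fin m → 𝓧 → ℝ) (ω ωhat : Fin m → 𝓧 → ℝ)
        (ρ₀ ρhat : Fin m → ℝ) (δ Δω ΔC : ℝ),
        (∀ s, Measurable (C s)) → (∀ s, Measurable (Chat s)) →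
        (∀ s x, |C s x| ≤ c₁) →
        (∀ s, Measurable (ω s)) → (∀ s, Measurable (ωhat s)) →
        (∀ s x, ω s x ∈ Set.Icc (0:ℝ) 1) → (∀ s x, ωhat s x ∈ Set.Icc (0:ℝ) 1) →
        (∀ x, (∑ s, ω s x) = 1) → (∀ x, (∑ s, ωhat s x) = 1) →
        ρ₀ ∈ stdSimplex ℝ (Fin m) → ρhat ∈ stdSimplex ℝ (Fin m) →
        δ ∈ Set.Icc (0:ℝ) 1 → 0 < Δω → 0 < ΔC →
        (∀ γ > (0:ℝ),
          μ {x | |∑ s, (δ * ω s x + (1 - δ) * ρ₀ s) * C s x| < γ}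
            ≤ ENNReal.ofReal (c₂ * γ ^ α)) →
        (∀ s, Integrable (fun x => (ωhat s x - ω s x) ^ 2) μ) →
        (∀ s, Integrable (fun x => (Chat s x - C s x) ^ 2) μ) →
        (∀ s, (∫ x, (ωhat s x - ω s x) ^ 2 ∂μ) ≤ Δω) →
        (∀ s, (∫ x, (Chat s x - C s x) ^ 2 ∂μ) ≤ ΔC) →
        (∫ x, (∑ s, (δ * ω s x + (1 - δ) * ρ₀ s) * C s x)
            * (if 0 < (∑ s, (δ * ω s x + (1 - δ) * ρ₀ s) * C s x) then (1:ℝ) else 0) ∂μ)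
          - (∫ x, (∑ s, (δ * ω s x + (1 - δ) * ρ₀ s) * C s x)
              * (if 0 < (∑ s, (δ * ωhat s x + (1 - δ) * ρhat s) * Chat s x) then (1:ℝ) else 0) ∂μ)
          ≤ c * (δ ^ 2 * Δω + (1 - δ) ^ 2 * (∑ s, (ρ₀ s - ρhat s) ^ 2) + ΔC)
              ^ ((1 + α) / (2 + α)) := by
  refine ⟨c₂ + 3 * (m:ℝ)^2 * (c₁^2 + 1), by positivity, ?_⟩
  intro 𝓧 _ μ _ C Chat ω ωhat ρ₀ ρhat δ Δω ΔC hCmeas hChatmeas hCbd hωmeas hωhatmeas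
    hωmem hωhatmem hωsum hωhatsum hρ₀ hρhat hδ hΔω hΔC hmargin hIω hIC hEω hEC
  obtain ⟨hδ0, hδ1⟩ := hδ
  set K : ℝ := 3 * (m:ℝ)^2 * (c₁^2 + 1) with hK
  set E : ℝ := δ ^ 2 * Δω + (1 - δ) ^ 2 * (∑ s, (ρ₀ s - ρhat s) ^ 2) + ΔC with hE
  set F : 𝓧 → ℝ := fun x => ∑ s, (δ * ω s x + (1 - δ) * ρ₀ s) * C s x with hFdef
  set G : 𝓧 → ℝ := fun x => ∑ s, (δ * ωhat s x + (1 - δ) * ρhat s) * Chat s x with hGdef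
  have hEpos : 0 < E := by
    have h1 : 0 ≤ δ ^ 2 * Δω := by positivity
    have h2 : 0 ≤ (1 - δ) ^ 2 * (∑ s, (ρ₀ s - ρhat s) ^ 2) :=
      mul_nonneg (sq_nonneg _) (Finset.sum_nonneg fun s _ => sq_nonneg _)
    rw [hE]; linarith
  set γ : ℝ := E ^ ((1:ℝ)/(2+α)) with hγdef
  have hγ : 0 < γ := Real.rpow_pos_of_pos hEpos _
  have h2α : (0:ℝ) < 2 + α := by linarith
  -- simplex facts
  have hρhat1 : ∀ s, ρhat s ≤ 1 := by
    intro s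
    have h := Finset.single_le_sum (f := ρhat) (fun t _ => hρhat.1 t) (Finset.mem_univ s)
    rw [hρhat.2] at h; exact h
  -- measurability
  have hFm : Measurable F :=
    Finset.measurable_sum _ fun s _ => (((hωmeas s).const_mul δ).add_const _).mul (hCmeas s)
  have hGm : Measurable G :=
    Finset.measurable_sum _ fun s _ => (((hωhatmeas s).const_mul δ).add_const _).mul (hChatmeas s)
  -- boundedness of F
  have hFbd : ∀ x, |F x| ≤ c₁ := by
    intro x
    have hp : ∀ s, 0 ≤ δ * ω s x + (1 - δ) * ρ₀ s := fun s =>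
      add_nonneg (mul_nonneg hδ0 (hωmem s x).1) (mul_nonneg (by linarith) (hρ₀.1 s))
    have hsum1 : (∑ s, (δ * ω s x + (1 - δ) * ρ₀ s)) = 1 := by
      rw [Finset.sum_add_distrib, ← Finset.mul_sum, ← Finset.mul_sum, hωsum x, hρ₀.2]; ring
    calc |F x| ≤ ∑ s, |(δ * ω s x + (1 - δ) * ρ₀ s) * C s x| :=
          Finset.abs_sum_le_sum_abs _ _
      _ ≤ ∑ s, (δ * ω s x + (1 - δ) * ρ₀ s) * c₁ := by
          refine Finset.sum_le_sum fun s _ => ?_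
          rw [abs_mul, abs_of_nonneg (hp s)]
          exact mul_le_mul_of_nonneg_left (hCbd s x) (hp s)
      _ = 1 * c₁ := by rw [← Finset.sum_mul, hsum1]
      _ = c₁ := one_mul _
  -- integrability of the two main integrands
  have hindFm : Measurable fun x => (if 0 < F x then (1:ℝ) else 0) :=
    Measurable.ite (measurableSet_lt measurable_const hFm) measurable_const measurable_const
  have hindGm : Measurable fun x => (if 0 < G x then (1:ℝ) else 0) :=
    Measurable.ite (measurableSet_lt measurable_const hGm) measurable_const measurable_const
  have hbnd : ∀ (I : 𝓧 → ℝ), (∀ x, I x = 0 ∨ I x = 1) →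
      ∀ x, ‖F x * I x‖ ≤ c₁ := by
    intro I hI x
    rcases hI x with h | h <;> rw [h] <;> simp [abs_mul]
    · exact hc₁.le
    · exact hFbd x
  have hInt1 : Integrable (fun x => F x * (if 0 < F x then (1:ℝ) else 0)) μ := by
    refine Integrable.mono' (integrable_const c₁) ((hFm.mul hindFm).aestronglyMeasurable) ?_
    exact Filter.Eventually.of_forall (hbnd _ (fun x => by split <;> simp))
  have hInt2 : Integrable (fun x => F x * (if 0 < G x then (1:ℝ) else 0)) μ := by
    refine Integrable.mono' (integrable_const c₁) ((hFm.mul hindGm).aestronglyMeasurable) ?_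
    exact Filter.Eventually.of_forall (hbnd _ (fun x => by split <;> simp))
  -- the pointwise error bound
  set Bs : Fin m → 𝓧 → ℝ := fun s x =>
    3 * (δ^2 * c₁^2 * (ωhat s x - ω s x)^2 + (1-δ)^2 * c₁^2 * (ρ₀ s - ρhat s)^2
      + (Chat s x - C s x)^2) with hBsdef
  set Bsum : 𝓧 → ℝ := fun x => (m:ℝ) * ∑ s, Bs s x with hBsumdef
  have hA : ∀ s x, ((δ * ω s x + (1 - δ) * ρ₀ s) * C s x
      - (δ * ωhat s x + (1 - δ) * ρhat s) * Chat s x)^2 ≤ Bs s x := by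
    intro s x
    have hq0 : 0 ≤ δ * ωhat s x + (1 - δ) * ρhat s :=
      add_nonneg (mul_nonneg hδ0 (hωhatmem s x).1) (mul_nonneg (by linarith) (hρhat.1 s))
    have hq1 : δ * ωhat s x + (1 - δ) * ρhat s ≤ 1 := by
      have h1 := (hωhatmem s x).2
      have h2 := hρhat1 s
      nlinarith
    have h := term_sq (δ * (ω s x - ωhat s x)) ((1-δ) * (ρ₀ s - ρhat s))
      (δ * ωhat s x + (1 - δ) * ρhat s) (C s x) (C s x - Chat s x) c₁ (hCbd s x) hq0 hq1
    calc ((δ * ω s x + (1 - δ) * ρ₀ s) * C s x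
        - (δ * ωhat s x + (1 - δ) * ρhat s) * Chat s x)^2
        = ((δ * (ω s x - ωhat s x) + (1-δ) * (ρ₀ s - ρhat s)) * C s x
            + (δ * ωhat s x + (1 - δ) * ρhat s) * (C s x - Chat s x))^2 := by ring
      _ ≤ 3 * ((δ * (ω s x - ωhat s x))^2 * c₁^2 + ((1-δ) * (ρ₀ s - ρhat s))^2 * c₁^2
            + (C s x - Chat s x)^2) := h
      _ = Bs s x := by rw [hBsdef]; ring
  have hFG : ∀ x, (F x - G x)^2 ≤ Bsum x := by
    intro x
    have hsub : F x - G x = ∑ s, ((δ * ω s x + (1 - δ) * ρ₀ s) * C s x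
        - (δ * ωhat s x + (1 - δ) * ρhat s) * Chat s x) := by
      rw [hFdef, hGdef]; exact (Finset.sum_sub_distrib _ _).symm
    rw [hsub]
    calc (∑ s, ((δ * ω s x + (1 - δ) * ρ₀ s) * C s x
          - (δ * ωhat s x + (1 - δ) * ρhat s) * Chat s x))^2
        ≤ (Finset.univ.card : ℝ) * ∑ s, ((δ * ω s x + (1 - δ) * ρ₀ s) * C s x
          - (δ * ωhat s x + (1 - δ) * ρhat s) * Chat s x)^2 := sq_sum_le_card_mul_sum_sq
      _ ≤ (m:ℝ) * ∑ s, Bs s x := by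
          rw [Finset.card_univ, Fintype.card_fin]
          exact mul_le_mul_of_nonneg_left (Finset.sum_le_sum fun s _ => hA s x) (by positivity)
      _ = Bsum x := rfl
  -- integrability of Bs, Bsum
  have hIBs : ∀ s, Integrable (Bs s) μ := by
    intro s
    exact ((((hIω s).const_mul (δ^2 * c₁^2)).add
      (integrable_const ((1-δ)^2 * c₁^2 * (ρ₀ s - ρhat s)^2))).add (hIC s)).const_mul 3
  have hIBsum : Integrable Bsum μ :=
    (integrable_finset_sum _ fun s _ => hIBs s).const_mul (m:ℝ)
  -- integral of Bsum is at most K * E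
  have hρs : ∀ s, (ρ₀ s - ρhat s)^2 ≤ ∑ t, (ρ₀ t - ρhat t)^2 := fun s =>
    Finset.single_le_sum (f := fun t => (ρ₀ t - ρhat t)^2) (fun t _ => sq_nonneg _) (Finset.mem_univ s)
  have hBsint : ∀ s, (∫ x, Bs s x ∂μ) ≤ 3 * (c₁^2 + 1) * E := by
    intro s
    have heq : (∫ x, Bs s x ∂μ) = 3 * (δ^2 * c₁^2 * (∫ x, (ωhat s x - ω s x)^2 ∂μ)
        + (1-δ)^2 * c₁^2 * (ρ₀ s - ρhat s)^2 + (∫ x, (Chat s x - C s x)^2 ∂μ)) := by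
      simp only [hBsdef]
      rw [integral_const_mul _ _]
      have hint12 : Integrable (fun x => δ^2 * c₁^2 * (ωhat s x - ω s x)^2
          + (1-δ)^2 * c₁^2 * (ρ₀ s - ρhat s)^2) μ :=
        ((hIω s).const_mul (δ^2 * c₁^2)).add
          (integrable_const ((1-δ)^2 * c₁^2 * (ρ₀ s - ρhat s)^2))
      rw [integral_add hint12 (hIC s)]
      rw [integral_add ((hIω s).const_mul (δ^2 * c₁^2))
        (integrable_const ((1-δ)^2 * c₁^2 * (ρ₀ s - ρhat s)^2))]
      rw [integral_const_mul _ _, integral_const]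
      simp [measure_univ]
    rw [heq]
    have h1 : δ^2 * c₁^2 * (∫ x, (ωhat s x - ω s x)^2 ∂μ) ≤ δ^2 * (c₁^2+1) * Δω := by
      calc δ^2 * c₁^2 * (∫ x, (ωhat s x - ω s x)^2 ∂μ) ≤ δ^2 * c₁^2 * Δω := by
            exact mul_le_mul_of_nonneg_left (hEω s) (by positivity)
        _ ≤ δ^2 * (c₁^2+1) * Δω := by
            have : (0:ℝ) ≤ δ^2 * Δω := by positivity
            linarith
    have h2 : (1-δ)^2 * c₁^2 * (ρ₀ s - ρhat s)^2
        ≤ (1-δ)^2 * (c₁^2+1) * (∑ t, (ρ₀ t - ρhat t)^2) := by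
      have hs := hρs s
      have hSig : (0:ℝ) ≤ ∑ t, (ρ₀ t - ρhat t)^2 :=
        Finset.sum_nonneg fun t _ => sq_nonneg _
      nlinarith [mul_le_mul_of_nonneg_left hs (mul_nonneg (sq_nonneg (1-δ)) (sq_nonneg c₁)),
        mul_nonneg (sq_nonneg (1-δ)) hSig]
    have h3 : (∫ x, (Chat s x - C s x)^2 ∂μ) ≤ (c₁^2+1) * ΔC := by
      have := hEC s
      nlinarith [mul_nonneg (sq_nonneg c₁) hΔC.le]
    rw [hE]
    linarith [h1, h2, h3]
  have hBsumint : (∫ x, Bsum x ∂μ) ≤ K * E := by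
    have heq : (∫ x, Bsum x ∂μ) = (m:ℝ) * ∑ s, (∫ x, Bs s x ∂μ) := by
      simp only [hBsumdef]
      rw [integral_const_mul _ _, integral_finset_sum _ fun s _ => hIBs s]
    rw [heq]
    have hsum : (∑ s : Fin m, (∫ x, Bs s x ∂μ)) ≤ (m:ℝ) * (3 * (c₁^2+1) * E) := by
      calc (∑ s : Fin m, (∫ x, Bs s x ∂μ)) ≤ ∑ _s : Fin m, 3 * (c₁^2+1) * E :=
            Finset.sum_le_sum fun s _ => hBsint s
        _ = (m:ℝ) * (3 * (c₁^2+1) * E) := by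
            rw [Finset.sum_const, Finset.card_univ, Fintype.card_fin, nsmul_eq_mul]
    calc (m:ℝ) * ∑ s, (∫ x, Bs s x ∂μ) ≤ (m:ℝ) * ((m:ℝ) * (3 * (c₁^2+1) * E)) :=
          mul_le_mul_of_nonneg_left hsum (by positivity)
      _ = K * E := by rw [hK]; ring
  -- indicator of the margin set
  have hSmeas : MeasurableSet {x | |F x| < γ} := measurableSet_lt hFm.abs measurable_const
  have hindM : Measurable fun x => (if |F x| < γ then (1:ℝ) else 0) :=
    Measurable.ite hSmeas measurable_const measurable_const
  have hIind : Integrable (fun x => (if |F x| < γ then (1:ℝ) else 0)) μ := by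
    refine Integrable.mono' (integrable_const 1) hindM.aestronglyMeasurable ?_
    exact Filter.Eventually.of_forall fun x => by split <;> simp
  have hindint : (∫ x, (if |F x| < γ then (1:ℝ) else 0) ∂μ) ≤ c₂ * γ ^ α := by
    have heq : (∫ x, (if |F x| < γ then (1:ℝ) else 0) ∂μ)
        = (μ {x | |F x| < γ}).toReal := by
      have : (fun x => (if |F x| < γ then (1:ℝ) else 0))
          = ({x | |F x| < γ}).indicator (fun _ => (1:ℝ)) := by
        ext x; simp [Set.indicator_apply]
      rw [this, integral_indicator_const _ hSmeas]
      simp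
      rfl
    rw [heq]
    have h := hmargin γ hγ
    have hrn : (0:ℝ) ≤ c₂ * γ ^ α := mul_nonneg hc₂.le (Real.rpow_pos_of_pos hγ α).le
    have := ENNReal.toReal_mono (by simp) h
    rwa [ENNReal.toReal_ofReal hrn] at this
  -- integrability of pointwise upper bound
  have hIR : Integrable (fun x => γ * (if |F x| < γ then (1:ℝ) else 0) + Bsum x / γ) μ :=
    (hIind.const_mul γ).add (hIBsum.div_const γ)
  have hIg : Integrable (fun x => F x * (if 0 < F x then (1:ℝ) else 0)
      - F x * (if 0 < G x then (1:ℝ) else 0)) μ := hInt1.sub hInt2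
  -- pointwise bound
  have hpt : ∀ x, F x * (if 0 < F x then (1:ℝ) else 0) - F x * (if 0 < G x then (1:ℝ) else 0)
      ≤ γ * (if |F x| < γ then (1:ℝ) else 0) + Bsum x / γ := by
    intro x
    have h := key_pointwise (F x) (G x) γ hγ
    have h2 : (F x - G x)^2 / γ ≤ Bsum x / γ :=
      div_le_div_of_nonneg_right (hFG x) hγ.le
    calc F x * (if 0 < F x then (1:ℝ) else 0) - F x * (if 0 < G x then (1:ℝ) else 0)
        = F x * ((if 0 < F x then (1:ℝ) else 0) - (if 0 < G x then (1:ℝ) else 0)) := by ring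
      _ ≤ γ * (if |F x| < γ then (1:ℝ) else 0) + (F x - G x)^2 / γ := h
      _ ≤ γ * (if |F x| < γ then (1:ℝ) else 0) + Bsum x / γ := by linarith
  -- assemble
  have hmain : (∫ x, F x * (if 0 < F x then (1:ℝ) else 0) ∂μ)
      - (∫ x, F x * (if 0 < G x then (1:ℝ) else 0) ∂μ)
      ≤ γ * (c₂ * γ ^ α) + (K * E) / γ := by
    rw [← integral_sub hInt1 hInt2]
    calc (∫ x, (F x * (if 0 < F x then (1:ℝ) else 0)
          - F x * (if 0 < G x then (1:ℝ) else 0)) ∂μ)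
        ≤ ∫ x, (γ * (if |F x| < γ then (1:ℝ) else 0) + Bsum x / γ) ∂μ :=
          integral_mono hIg hIR hpt
      _ = γ * (∫ x, (if |F x| < γ then (1:ℝ) else 0) ∂μ) + (∫ x, Bsum x ∂μ) / γ := by
          rw [integral_add (hIind.const_mul γ) (hIBsum.div_const γ),
            integral_const_mul _ _, integral_div]
      _ ≤ γ * (c₂ * γ ^ α) + (K * E) / γ := by
          have h1 : γ * (∫ x, (if |F x| < γ then (1:ℝ) else 0) ∂μ) ≤ γ * (c₂ * γ ^ α) :=
            mul_le_mul_of_nonneg_left hindint hγ.le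
          have h2 : (∫ x, Bsum x ∂μ) / γ ≤ (K * E) / γ :=
            div_le_div_of_nonneg_right hBsumint hγ.le
          linarith
  -- final arithmetic with rpow
  have hfin : γ * (c₂ * γ ^ α) + (K * E) / γ
      = (c₂ + K) * E ^ ((1 + α) / (2 + α)) := by
    have hexp1 : γ * γ ^ α = γ ^ ((1:ℝ) + α) := by
      rw [Real.rpow_add hγ, Real.rpow_one]
    have hexp2 : γ ^ ((1:ℝ) + α) = E ^ ((1 + α) / (2 + α)) := by
      rw [hγdef, ← Real.rpow_mul hEpos.le]
      congr 1
      rw [div_mul_eq_mul_div, one_mul]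
    have hexp3 : E / γ = E ^ ((1 + α) / (2 + α)) := by
      have h1 : ((1:ℝ) + α) / (2 + α) = 1 - 1 / (2 + α) := by
        rw [eq_sub_iff_add_eq, ← add_div, div_eq_one_iff_eq (ne_of_gt h2α)]
        ring
      rw [h1, Real.rpow_sub hEpos, Real.rpow_one, hγdef]
    calc γ * (c₂ * γ ^ α) + (K * E) / γ
        = c₂ * (γ * γ ^ α) + K * (E / γ) := by ring
      _ = c₂ * E ^ ((1 + α) / (2 + α)) + K * E ^ ((1 + α) / (2 + α)) := by
          rw [hexp1, hexp2, hexp3]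
      _ = (c₂ + K) * E ^ ((1 + α) / (2 + α)) := by ring
  calc (∫ x, F x * (if 0 < F x then (1:ℝ) else 0) ∂μ)
      - (∫ x, F x * (if 0 < G x then (1:ℝ) else 0) ∂μ)
      ≤ γ * (c₂ * γ ^ α) + (K * E) / γ := hmain
    _ = (c₂ + K) * E ^ ((1 + α) / (2 + α)) := hfin
end

section
/- Let μ be a probability measure on a measurable space 𝒳 and f : 𝒳 → ℝ a μ-integrable measurable function. For h > 0 define Φ_h : ℝ → ℝ by Φ_h(u) = 0 for u < −h, Φ_h(u) = (u+h)/(2h) for −h ≤ u ≤ h, and Φ_h(u) = 1 for u > h. Then | ∫ f(x)·Φ_h(f(x)) dμ(x) − ∫ max(f(x), 0) dμ(x) | ≤ h/8. -/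
open MeasureTheory

lemma phi_pointwise (h u : ℝ) (hh : 0 < h) :
    |u * (if u < -h then (0:ℝ) else if u ≤ h then (u + h) / (2 * h) else 1) - max u 0| ≤ h / 8 := by
  rcases lt_or_ge u (-h) with h1 | h1
  · rw [if_pos h1, max_eq_right (by linarith)]
    simp [abs_of_nonneg, le_of_lt hh]
    linarith
  · rw [if_neg (not_lt.mpr h1)]
    rcases le_or_gt u h with h2 | h2
    · rw [if_pos h2]
      have h2h : (0:ℝ) < 2 * h := by linarith
      rcases le_or_gt u 0 with h3 | h3
      · have e : u * ((u + h) / (2 * h)) - max u 0 = (u * u + u * h) / (2 * h) := by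
          rw [max_eq_right h3]
          field_simp
          ring
        rw [e, abs_le]
        constructor
        · rw [neg_le, ← neg_div, div_le_iff₀ h2h]
          nlinarith [sq_nonneg (2 * u + h)]
        · rw [div_le_iff₀ h2h]
          nlinarith [mul_nonneg (neg_nonneg.mpr h3) (by linarith : (0:ℝ) ≤ u + h)]
      · have e : u * ((u + h) / (2 * h)) - max u 0 = (u * u - u * h) / (2 * h) := by
          rw [max_eq_left h3.le]
          field_simp
          ring
        rw [e, abs_le]
        constructor
        · rw [neg_le, ← neg_div, div_le_iff₀ h2h]
          nlinarith [sq_nonneg (2 * u - h)]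
        · rw [div_le_iff₀ h2h]
          nlinarith [mul_nonneg h3.le (by linarith : (0:ℝ) ≤ h - u)]
    · rw [if_neg (not_le.mpr h2), max_eq_left (by linarith)]
      simp; linarith

/-- Uniform approximation of the worst-case objective by the smoothed surrogate loss:
`|∫ f Φ_h(f) dμ - ∫ max(f,0) dμ| ≤ h/8`. -/
theorem surrogate_objective_error
    {𝓧 : Type*} [MeasurableSpace 𝓧] (μ : Measure 𝓧) [IsProbabilityMeasure μ]
    (f : 𝓧 → ℝ) (hf : Measurable f) (hfint : Integrable f μ)
    (h : ℝ) (hh : 0 < h) :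
    |(∫ x, f x * (if f x < -h then (0:ℝ) else if f x ≤ h then (f x + h) / (2 * h) else 1) ∂μ)
        - ∫ x, max (f x) 0 ∂μ|
      ≤ h / 8 := by
  set Φ : ℝ → ℝ := fun u => if u < -h then (0:ℝ) else if u ≤ h then (u + h) / (2 * h) else 1
    with hΦ
  have hΦmeas : Measurable Φ := by
    apply Measurable.ite (measurableSet_lt measurable_id measurable_const) measurable_const
    apply Measurable.ite (measurableSet_le measurable_id measurable_const)
    · exact (measurable_id.add_const h).div_const _
    · exact measurable_const
  have hΦbdd : ∀ u, |Φ u| ≤ 1 := by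
    intro u
    simp only [hΦ]
    rcases lt_or_ge u (-h) with h1 | h1
    · simp [h1]
    · rw [if_neg (not_lt.mpr h1)]
      rcases le_or_gt u h with h2 | h2
      · rw [if_pos h2, abs_div, abs_of_nonneg (by linarith), abs_of_pos (by linarith)]
        rw [div_le_one (by linarith)]; linarith
      · simp [not_le.mpr h2]
  have hint1 : Integrable (fun x => f x * Φ (f x)) μ := by
    apply hfint.mono ((hf.mul (hΦmeas.comp hf)).aestronglyMeasurable)
    filter_upwards with x
    rw [Pi.mul_apply, Function.comp_apply, norm_mul, Real.norm_eq_abs, Real.norm_eq_abs]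
    calc |f x| * |Φ (f x)| ≤ |f x| * 1 := by
          exact mul_le_mul_of_nonneg_left (hΦbdd _) (abs_nonneg _)
      _ = |f x| := mul_one _
  have hint2 : Integrable (fun x => max (f x) 0) μ := hfint.pos_part
  rw [← integral_sub hint1 hint2]
  calc |∫ x, (f x * Φ (f x) - max (f x) 0) ∂μ|
      ≤ ∫ x, |f x * Φ (f x) - max (f x) 0| ∂μ := by
        simpa [Real.norm_eq_abs] using
          norm_integral_le_integral_norm (fun x => f x * Φ (f x) - max (f x) 0) (μ := μ)
    _ ≤ ∫ _x, h / 8 ∂μ := by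
        apply integral_mono_of_nonneg (Filter.Eventually.of_forall fun x => abs_nonneg _)
          (integrable_const _)
        filter_upwards with x
        exact phi_pointwise h (f x) hh
    _ = h / 8 := by simp
end

section
/- Let μ be a probability measure on a measurable space 𝒳. Fix an integer m ≥ 1 and let Δ = {ρ ∈ ℝ^m : ρ_s ≥ 0 for all s and Σ_{s=1}^m ρ_s = 1} be the probability simplex. Let C_1, …, C_m : 𝒳 → ℝ be measurable and μ-integrable, let ω_1, …, ω_m : 𝒳 → [0,1] be measurable with Σ_{s=1}^m ω_s(x) = 1 for every x, let δ ∈ [0,1], and for ρ ∈ Δ define f_ρ^δ(x) = Σ_{s=1}^m (δ ω_s(x) + (1−δ) ρ_s) C_s(x). For h > 0 define Φ_h : ℝ → ℝ by Φ_h(u) = 0 for u < −h, Φ_h(u) = (u+h)/(2h) for −h ≤ u ≤ h, and Φ_h(u) = 1 for u > h. If ρ̃ ∈ Δ minimizes the smoothed surrogate objective ρ ↦ ∫ f_ρ^δ(x)·Φ_h(f_ρ^δ(x)) dμ(x) over Δ, then ∫ max(f_{ρ̃}^δ(x), 0) dμ(x) ≤ inf_{ρ ∈ Δ} ∫ max(f_ρ^δ(x),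 0) dμ(x) + h/4. -/
open MeasureTheory

private lemma phi_bounds (h u : ℝ) (hh : 0 < h) :
    u * (if u < -h then (0:ℝ) else if u ≤ h then (u + h) / (2 * h) else 1) ≤ max u 0 ∧
    max u 0 ≤ u * (if u < -h then (0:ℝ) else if u ≤ h then (u + h) / (2 * h) else 1) + h / 8 := by
  split_ifs with h1 h2
  · constructor
    · simp [le_max_iff]
    · have : max u 0 = 0 := max_eq_right (by linarith)
      rw [this]; nlinarith
  · push_neg at h1
    rcases le_or_gt u 0 with hu | hu
    · have hmax : max u 0 = 0 := max_eq_right hu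
      rw [hmax]
      constructor
      · have : 0 ≤ (u + h) / (2 * h) := div_nonneg (by linarith) (by linarith)
        exact mul_nonpos_of_nonpos_of_nonneg hu this
      · rw [div_eq_mul_inv, ← mul_assoc]
        have heq : u * (u + h) * (2 * h)⁻¹ + h / 8
            = (8 * u * (u + h) + h * (2 * h)) * (8 * (2 * h))⁻¹ := by
          field_simp
        rw [heq]
        apply mul_nonneg _ (by positivity)
        nlinarith [sq_nonneg (2 * u + h)]
    · have hmax : max u 0 = u := max_eq_left hu.le
      rw [hmax]
      constructor
      · rw [div_eq_mul_inv, ← mul_assoc, ← sub_nonneg]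
        have : u - u * (u + h) * (2 * h)⁻¹ = u * (h - u) * (2 * h)⁻¹ := by
          field_simp; ring
        rw [this]
        apply mul_nonneg (mul_nonneg hu.le (by linarith)) (by positivity)
      · rw [div_eq_mul_inv, ← mul_assoc, ← sub_nonneg]
        have : u * (u + h) * (2 * h)⁻¹ + h / 8 - u
            = (8 * u * (u + h) + h * (2 * h) - 8 * u * (2 * h)) * (8 * (2 * h))⁻¹ := by
          field_simp
        rw [this]
        apply mul_nonneg _ (by positivity)
        nlinarith [sq_nonneg (2 * u - h)]
  · push_neg at h1 h2
    have hmax : max u 0 = u := max_eq_left (by linarith)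
    rw [hmax]
    constructor
    · linarith [mul_one u]
    · nlinarith

/-- Near-optimality of the population surrogate minimizer (Step 3 of the estimation
procedure): if `ρ̃` minimizes the smoothed surrogate objective `ρ ↦ ∫ f_ρ^δ Φ_h(f_ρ^δ) dμ`
over the simplex, then `∫ max(f_{ρ̃}^δ, 0) dμ ≤ inf_{ρ∈Δ} ∫ max(f_ρ^δ, 0) dμ + h/4`. -/
theorem surrogate_minimizer_near_optimal
    {𝓧 : Type*} [MeasurableSpace 𝓧] (μ : Measure 𝓧) [IsProbabilityMeasure μ]
    (m : ℕ) (hm : 1 ≤ m)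
    (C : Fin m → 𝓧 → ℝ) (hCmeas : ∀ s, Measurable (C s)) (hCint : ∀ s, Integrable (C s) μ)
    (ω : Fin m → 𝓧 → ℝ) (hωmeas : ∀ s, Measurable (ω s))
    (hω01 : ∀ s x, ω s x ∈ Set.Icc (0:ℝ) 1) (hωsum : ∀ x, (∑ s, ω s x) = 1)
    (δ : ℝ) (hδ : δ ∈ Set.Icc (0:ℝ) 1)
    (h : ℝ) (hh : 0 < h)
    (ρt : Fin m → ℝ) (hρt : ρt ∈ stdSimplex ℝ (Fin m))
    (hmin : ∀ ρ ∈ stdSimplex ℝ (Fin m),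
        (∫ x, (∑ s, (δ * ω s x + (1 - δ) * ρt s) * C s x)
            * (if (∑ s, (δ * ω s x + (1 - δ) * ρt s) * C s x) < -h then (0:ℝ)
              else if (∑ s, (δ * ω s x + (1 - δ) * ρt s) * C s x) ≤ h
                then ((∑ s, (δ * ω s x + (1 - δ) * ρt s) * C s x) + h) / (2 * h)
                else 1) ∂μ)
          ≤ ∫ x, (∑ s, (δ * ω s x + (1 - δ) * ρ s) * C s x)
              * (if (∑ s, (δ * ω s x + (1 - δ) * ρ s) * C s x) < -h then (0:ℝ)
                else if (∑ s, (δ * ω s x + (1 - δ) * ρ s) * C s x) ≤ h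
                  then ((∑ s, (δ * ω s x + (1 - δ) * ρ s) * C s x) + h) / (2 * h)
                  else 1) ∂μ) :
    ∀ ρ ∈ stdSimplex ℝ (Fin m),
      (∫ x, max (∑ s, (δ * ω s x + (1 - δ) * ρt s) * C s x) 0 ∂μ)
        ≤ (∫ x, max (∑ s, (δ * ω s x + (1 - δ) * ρ s) * C s x) 0 ∂μ) + h / 4 := by
  intro ρ hρ
  -- abbreviations
  set g : (Fin m → ℝ) → 𝓧 → ℝ := fun r x => ∑ s, (δ * ω s x + (1 - δ) * r s) * C s x with hg
  have hgmeas : ∀ r, Measurable (g r) := by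
    intro r
    apply Finset.measurable_sum
    intro s _
    exact (((hωmeas s).const_mul δ).add measurable_const).mul (hCmeas s)
  have hgint : ∀ r, Integrable (g r) μ := by
    intro r
    apply integrable_finset_sum
    intro s _
    have h1 : Integrable (fun x => (δ * ω s x) * C s x) μ :=
      (hCint s).bdd_mul ((hωmeas s).const_mul δ).aestronglyMeasurable
        (c := |δ|) (Filter.Eventually.of_forall fun x => by
          rw [Real.norm_eq_abs, abs_mul]
          have := hω01 s x
          have : |ω s x| ≤ 1 := abs_le.2 ⟨by linarith [this.1], this.2⟩
          nlinarith [abs_nonneg δ])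
    have h2 : Integrable (fun x => ((1 - δ) * r s) * C s x) μ :=
      (hCint s).const_mul _
    have := h1.add h2
    simpa [add_mul, Pi.add_def] using this
  -- the surrogate integrand
  set Φ : ℝ → ℝ := fun u => if u < -h then (0:ℝ) else if u ≤ h then (u + h) / (2 * h) else 1
    with hΦ
  have hΦmeas : Measurable Φ := by
    apply Measurable.ite (measurableSet_lt measurable_id measurable_const) measurable_const
    apply Measurable.ite (measurableSet_le measurable_id measurable_const) _ measurable_const
    exact (measurable_id.add_const h).div_const _
  have hsint : ∀ r, Integrable (fun x => g r x * Φ (g r x)) μ := by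
    intro r
    apply (hgint r).mono (((hgmeas r).mul (hΦmeas.comp (hgmeas r))).aestronglyMeasurable)
    filter_upwards with x
    have hb := phi_bounds h (g r x) hh
    rw [Real.norm_eq_abs, Real.norm_eq_abs, Pi.mul_apply, Function.comp_apply, abs_mul]
    have hΦ01 : 0 ≤ Φ (g r x) ∧ Φ (g r x) ≤ 1 := by
      simp only [hΦ]
      split_ifs with h1 h2
      · norm_num
      · constructor
        · apply div_nonneg (by push_neg at h1; linarith) (by linarith)
        · rw [div_le_one (by linarith)]; linarith
      · norm_num
    have hle : |Φ (g r x)| ≤ 1 := abs_le.2 ⟨by linarith [hΦ01.1], hΦ01.2⟩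
    exact mul_le_of_le_one_right (abs_nonneg _) hle
  have hmint : ∀ r, Integrable (fun x => max (g r x) 0) μ := fun r => (hgint r).pos_part
  -- pointwise comparisons ⇒ integral comparisons
  have key1 : ∀ r, (∫ x, max (g r x) 0 ∂μ) ≤ (∫ x, g r x * Φ (g r x) ∂μ) + h / 8 := by
    intro r
    have : (∫ x, max (g r x) 0 ∂μ) ≤ ∫ x, (g r x * Φ (g r x) + h / 8) ∂μ := by
      apply integral_mono (hmint r) ((hsint r).add (integrable_const _))
      intro x
      exact (phi_bounds h (g r x) hh).2
    rwa [integral_add (hsint r) (integrable_const _), integral_const, probReal_univ,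
      smul_eq_mul, one_mul] at this
  have key2 : ∀ r, (∫ x, g r x * Φ (g r x) ∂μ) ≤ ∫ x, max (g r x) 0 ∂μ := by
    intro r
    exact integral_mono (hsint r) (hmint r) fun x => (phi_bounds h (g r x) hh).1
  have hm' := hmin ρ hρ
  calc (∫ x, max (g ρt x) 0 ∂μ)
      ≤ (∫ x, g ρt x * Φ (g ρt x) ∂μ) + h / 8 := key1 ρt
    _ ≤ (∫ x, g ρ x * Φ (g ρ x) ∂μ) + h / 8 := by
        have : (∫ x, g ρt x * Φ (g ρt x) ∂μ) ≤ ∫ x, g ρ x * Φ (g ρ x) ∂μ := hm'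
        linarith
    _ ≤ (∫ x, max (g ρ x) 0 ∂μ) + h / 8 := by linarith [key2 ρ]
    _ ≤ (∫ x, max (g ρ x) 0 ∂μ) + h / 4 := by linarith
end
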